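/- arXiv:1910.01499 — 2 statements merged into one kernel-verified Lean document; each statement's English description precedes it below -/
import Mathlib

section
/- Let φ : G′ → G be a harmonic morphism of graphs with G connected. Then the sum Σ{ d_φ(v′) : v′ ∈ V(G′), φ(v′) = v } is the same for every vertex v ∈ V(G); denoting this common value deg(φ), one moreover has deg(φ) = Σ{ d_φ(e′) : e′ ∈ E(G′), φ(e′) = e } for every edge e ∈ E(G) and deg(φ) = Σ{ d_φ(p′) : p′ ∈ L(G′), φ(p′) = p } for every leg p ∈ L(G). Furthermore, if deg(φ) > 0 then φ : X(G′) → X(G) is surjective. -/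
namespace TropDR

open Finset

/-- `Finset.filter` with classical decidability. -/
noncomputable def cfilter {α : Type*} (p : α → Prop) (s : Finset α) : Finset α :=
  @Finset.filter α p (Classical.decPred p) s

/-- A graph with legs: a finite set `X` together with an idempotent root map `rt`
and an involution `inv` fixing every root vertex. -/
structure PGraph where
  X : Type
  [fintypeX : Fintype X]
  [decEqX : DecidableEq X]
  rt : X → X
  inv : X → X
  rt_idem : ∀ x, rt (rt x) = rt x
  inv_invol : ∀ x, inv (inv x) = x
  inv_fix_rt : ∀ x, inv (rt x) = rt x

attribute [instance] PGraph.fintypeX PGraph.decEqX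

namespace PGraph

variable (G : PGraph)

/-- Vertices are the fixed points (= the image) of the root map. -/
def IsVertex (x : G.X) : Prop := G.rt x = x

/-- Half-edges are the non-vertices. -/
def IsHalf (x : G.X) : Prop := G.rt x ≠ x

/-- Legs are the `inv`-fixed half-edges. -/
def IsLeg (x : G.X) : Prop := G.IsHalf x ∧ G.inv x = x

/-- Halves of genuine edges: half-edges moved by the involution. -/
def IsEdgeHalf (x : G.X) : Prop := G.IsHalf x ∧ G.inv x ≠ x

noncomputable def vertexSet : Finset G.X := cfilter (fun x => G.IsVertex x) Finset.univ

noncomputable def legSet : Finset G.X := cfilter (fun x => G.IsLeg x) Finset.univ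

noncomputable def edgeHalfSet : Finset G.X := cfilter (fun x => G.IsEdgeHalf x) Finset.univ

/-- Tangent directions at a vertex `v`: half-edges rooted at `v`. -/
noncomputable def tangents (v : G.X) : Finset G.X :=
  cfilter (fun h => G.IsHalf h ∧ G.rt h = v) Finset.univ

noncomputable def valence (v : G.X) : ℕ := (G.tangents v).card

/-- The number of edges: half the number of edge half-edges. -/
noncomputable def numEdges : ℕ := G.edgeHalfSet.card / 2

noncomputable def numLegs : ℕ := G.legSet.card

noncomputable def numVertices : ℕ := G.vertexSet.card

/-- Connectedness: the equivalence relation generated by `x ∼ rt x` and `x ∼ inv x`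
has a single class (and `X` is nonempty). -/
def Connected : Prop :=
  Nonempty G.X ∧ ∀ x y : G.X, Relation.EqvGen (fun a b => G.rt a = b ∨ G.inv a = b) x y

/-- A subgraph: a subset of `X` closed under the root map and the involution. -/
def IsSubgraph (F : Finset G.X) : Prop :=
  (∀ x ∈ F, G.rt x ∈ F) ∧ (∀ x ∈ F, G.inv x ∈ F)

/-- Valency of `v` inside a subgraph `F`. -/
noncomputable def valIn (F : Finset G.X) (v : G.X) : ℕ := (G.tangents v ∩ F).card

end PGraph

/-- A morphism of graphs: commutes with the root maps and involutions,
and maps no edge into a leg. -/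
structure GraphHom (G' G : PGraph) where
  toFun : G'.X → G.X
  map_rt : ∀ x, toFun (G'.rt x) = G.rt (toFun x)
  map_inv : ∀ x, toFun (G'.inv x) = G.inv (toFun x)
  edge_not_leg : ∀ h, G'.IsEdgeHalf h → ¬ G.IsLeg (toFun h)

/-- A harmonic morphism of graphs: a graph morphism together with a degree function. -/
structure HarmonicHom (G' G : PGraph) extends GraphHom G' G where
  deg : G'.X → ℕ
  deg_edge : ∀ h, G'.IsEdgeHalf h → deg (G'.inv h) = deg h
  deg_zero_iff : ∀ h, G'.IsHalf h → (deg h = 0 ↔ G.IsVertex (toFun h))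
  harmonic : ∀ v', G'.IsVertex v' → ∀ h, G.IsHalf h → G.rt h = toFun v' →
    deg v' = ∑ h' ∈ cfilter (fun h' => toFun h' = h) (G'.tangents v'), deg h'

namespace HarmonicHom

variable {G' G : PGraph} (φ : HarmonicHom G' G)

/-- A harmonic morphism is finite if it has positive degree on every half-edge. -/
def Finite : Prop := ∀ h, G'.IsHalf h → 0 < φ.deg h

/-- The sum of the degrees over the vertex fiber of `v`. -/
noncomputable def vertexFiberDeg (v : G.X) : ℕ :=
  ∑ v' ∈ cfilter (fun v' => φ.toFun v' = v) G'.vertexSet, φ.deg v'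

end HarmonicHom

/-- A weighted graph: a graph together with a genus function on (all elements;
only the values at vertices are relevant). -/
structure WGraph extends PGraph where
  gw : X → ℕ

namespace WGraph

variable (G : WGraph)

/-- The genus of a (connected) weighted graph. -/
noncomputable def genus : ℤ :=
  (G.toPGraph.numEdges : ℤ) - (G.toPGraph.numVertices : ℤ) + 1 +
    ∑ v ∈ G.toPGraph.vertexSet, (G.gw v : ℤ)

/-- The Euler characteristic of a vertex. -/
noncomputable def chiV (v : G.X) : ℤ :=
  2 - 2 * (G.gw v : ℤ) - (G.toPGraph.valence v : ℤ)

/-- The Euler characteristic of a (connected) weighted graph. -/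
noncomputable def chi : ℤ := 2 - 2 * G.genus - (G.toPGraph.numLegs : ℤ)

end WGraph

/-- The ramification degree of a (finite) harmonic morphism of weighted graphs at `v'`. -/
noncomputable def ram {G' G : WGraph} (φ : HarmonicHom G'.toPGraph G.toPGraph) (v' : G'.X) : ℤ :=
  (φ.deg v' : ℤ) * G.chiV (φ.toFun v') - G'.chiV v'

def Unramified {G' G : WGraph} (φ : HarmonicHom G'.toPGraph G.toPGraph) : Prop :=
  ∀ v', G'.toPGraph.IsVertex v' → ram φ v' = 0

def Effective {G' G : WGraph} (φ : HarmonicHom G'.toPGraph G.toPGraph) : Prop :=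
  ∀ v', G'.toPGraph.IsVertex v' → 0 ≤ ram φ v'

section Aux

lemma mem_cfilter {α : Type*} {p : α → Prop} {s : Finset α} {x : α} :
    x ∈ cfilter p s ↔ x ∈ s ∧ p x := by
  classical
  simp [cfilter, Finset.mem_filter]

variable {G' G : PGraph} (φ : HarmonicHom G' G)

/-- Sum of degrees over the full fiber of `x`. -/
noncomputable def fullFiberDeg (x : G.X) : ℕ :=
  ∑ x' ∈ cfilter (fun x' => φ.toFun x' = x) Finset.univ, φ.deg x'

lemma fiber_isHalf {h : G.X} (hh : G.IsHalf h) {x' : G'.X} (hx' : φ.toFun x' = h) :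
    G'.IsHalf x' := by
  intro hrt
  apply hh
  calc G.rt h = G.rt (φ.toFun x') := by rw [hx']
    _ = φ.toFun (G'.rt x') := (φ.map_rt x').symm
    _ = φ.toFun x' := by rw [hrt]
    _ = h := hx'

lemma fullFiberDeg_vertex {v : G.X} (hv : G.IsVertex v) :
    fullFiberDeg φ v = φ.vertexFiberDeg v := by
  refine (Finset.sum_subset ?_ ?_).symm
  · intro x hx
    rw [mem_cfilter] at hx ⊢
    exact ⟨Finset.mem_univ _, hx.2⟩
  · intro x hx hx'
    rw [mem_cfilter] at hx hx'
    push_neg at hx'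
    have hxv : ¬ G'.IsVertex x := by
      intro hxvert
      exact (hx' (by rw [PGraph.vertexSet, mem_cfilter]; exact ⟨Finset.mem_univ _, hxvert⟩)) hx.2
    exact (φ.deg_zero_iff x hxv).2 (by rw [hx.2]; exact hv)

lemma fullFiberDeg_inv (x : G.X) : fullFiberDeg φ (G.inv x) = fullFiberDeg φ x := by
  by_cases hx : G.inv x = x
  · rw [hx]
  · have hxhalf : G.IsHalf x := by
      intro h
      exact hx (by rw [← h, G.inv_fix_rt, h])
    have hinvhalf : G.IsHalf (G.inv x) := by
      intro h
      have : G.inv (G.inv x) = G.inv x := by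
        conv_lhs => rw [← h, G.inv_fix_rt, h]
      rw [G.inv_invol] at this
      exact hx this.symm
    refine Finset.sum_nbij' (i := fun x' => G'.inv x') (j := fun x' => G'.inv x')
      ?_ ?_ ?_ ?_ ?_
    · intro a ha
      rw [mem_cfilter] at ha ⊢
      refine ⟨Finset.mem_univ _, ?_⟩
      rw [φ.map_inv, ha.2, G.inv_invol]
    · intro a ha
      rw [mem_cfilter] at ha ⊢
      refine ⟨Finset.mem_univ _, ?_⟩
      rw [φ.map_inv, ha.2]
    · intro a _; exact G'.inv_invol a
    · intro a _; exact G'.inv_invol a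
    · intro a ha
      rw [mem_cfilter] at ha
      have haH : G'.IsHalf a := fiber_isHalf φ hinvhalf ha.2
      have haE : G'.IsEdgeHalf a := by
        refine ⟨haH, fun heq => hx ?_⟩
        have h1 : φ.toFun a = G.inv (φ.toFun a) := by
          conv_lhs => rw [← heq]
          rw [φ.map_inv]
        rw [ha.2, G.inv_invol] at h1
        exact h1
      exact (φ.deg_edge a haE).symm

lemma fullFiberDeg_rt (x : G.X) : fullFiberDeg φ (G.rt x) = fullFiberDeg φ x := by
  by_cases hx : G.rt x = x
  · rw [hx]
  · have hxhalf : G.IsHalf x := hx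
    have hv : G.IsVertex (G.rt x) := G.rt_idem x
    rw [fullFiberDeg_vertex φ hv]
    unfold HarmonicHom.vertexFiberDeg
    have hsum : ∀ v' ∈ cfilter (fun v' => φ.toFun v' = G.rt x) G'.vertexSet,
        φ.deg v' = ∑ h' ∈ cfilter (fun h' => φ.toFun h' = x) (G'.tangents v'), φ.deg h' := by
      intro v' hv'
      rw [mem_cfilter, PGraph.vertexSet, mem_cfilter] at hv'
      exact φ.harmonic v' hv'.1.2 x hxhalf hv'.2.symm
    rw [Finset.sum_congr rfl hsum]
    classical
    have hmaps : ∀ x' ∈ cfilter (fun x' => φ.toFun x' = x) Finset.univ,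
        G'.rt x' ∈ cfilter (fun v' => φ.toFun v' = G.rt x) G'.vertexSet := by
      intro x' hx'
      rw [mem_cfilter] at hx'
      rw [mem_cfilter, PGraph.vertexSet, mem_cfilter]
      exact ⟨⟨Finset.mem_univ _, G'.rt_idem x'⟩, by rw [φ.map_rt, hx'.2]⟩
    have := Finset.sum_fiberwise_of_maps_to hmaps φ.deg
    rw [fullFiberDeg, ← this]
    apply Finset.sum_congr rfl
    intro v' hv'
    apply Finset.sum_congr _ (fun _ _ => rfl)
    ext h'
    simp only [Finset.mem_filter, mem_cfilter, PGraph.tangents, Finset.mem_univ, true_and]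
    constructor
    · rintro ⟨⟨_, hrt⟩, hφ⟩
      exact ⟨hφ, hrt⟩
    · rintro ⟨hφ, hrt⟩
      exact ⟨⟨fiber_isHalf φ hxhalf hφ, hrt⟩, hφ⟩

lemma fullFiberDeg_const (hG : G.Connected) (x y : G.X) :
    fullFiberDeg φ x = fullFiberDeg φ y := by
  induction hG.2 x y with
  | rel a b hab =>
    rcases hab with h | h
    · rw [← h, fullFiberDeg_rt]
    · rw [← h, fullFiberDeg_inv]
  | refl => rfl
  | symm _ _ _ ih => exact ih.symm
  | trans _ _ _ _ _ ih1 ih2 => exact ih1.trans ih2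

end Aux

/-- Let `φ : G' → G` be a harmonic morphism of graphs with `G` connected.
Then the fiber sum `Σ { d_φ(v') : v' ∈ V(G'), φ(v') = v }` is the same for every vertex
`v ∈ V(G)`; this common value `deg φ` also equals, for every edge `e` of `G`, the sum of
`d_φ` over the edges of `G'` mapping to `e` (expressed here as the sum over the fiber of
either half-edge of `e`, using that `d_φ` takes equal values on the two halves of an edge
and that each edge over `e` contributes exactly one half-edge over a chosen half of `e`),
and, for every leg `p` of `G`, the sum of `d_φ` over the legs of `G'` mapping to `p`.
Moreover, if `deg φ > 0` then `φ` is surjective. -/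
theorem degree_of_harmonic_morphism_well_defined
    (G' G : PGraph) (hG : G.Connected) (φ : HarmonicHom G' G) :
    (∀ v, G.IsVertex v → ∀ w, G.IsVertex w →
      φ.vertexFiberDeg v = φ.vertexFiberDeg w) ∧
    (∀ v, G.IsVertex v → ∀ h, G.IsEdgeHalf h →
      φ.vertexFiberDeg v =
        ∑ h' ∈ cfilter (fun h' => φ.toFun h' = h) G'.edgeHalfSet, φ.deg h') ∧
    (∀ v, G.IsVertex v → ∀ p, G.IsLeg p →
      φ.vertexFiberDeg v =
        ∑ p' ∈ cfilter (fun p' => φ.toFun p' = p) G'.legSet, φ.deg p') ∧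
    ((∃ v, G.IsVertex v ∧ 0 < φ.vertexFiberDeg v) → Function.Surjective φ.toFun) := by
  have hedge : ∀ h : G.X, G.IsEdgeHalf h →
      fullFiberDeg φ h = ∑ h' ∈ cfilter (fun h' => φ.toFun h' = h) G'.edgeHalfSet, φ.deg h' := by
    intro h hh
    refine (Finset.sum_subset ?_ ?_).symm
    · intro x hx
      rw [mem_cfilter] at hx ⊢
      exact ⟨Finset.mem_univ _, hx.2⟩
    · intro x hx hx'
      rw [mem_cfilter] at hx hx'
      push_neg at hx'
      exfalso
      have hxh : G'.IsHalf x := fiber_isHalf φ hh.1 hx.2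
      have hxne : ¬ G'.IsEdgeHalf x := by
        intro hE
        exact (hx' (by rw [PGraph.edgeHalfSet, mem_cfilter]; exact ⟨Finset.mem_univ _, hE⟩)) hx.2
      have hinv : G'.inv x = x := by
        by_contra hne
        exact hxne ⟨hxh, hne⟩
      apply hh.2
      rw [← hx.2, ← φ.map_inv, hinv]
  have hleg : ∀ p : G.X, G.IsLeg p →
      fullFiberDeg φ p = ∑ p' ∈ cfilter (fun p' => φ.toFun p' = p) G'.legSet, φ.deg p' := by
    intro p hp
    refine (Finset.sum_subset ?_ ?_).symm
    · intro x hx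
      rw [mem_cfilter] at hx ⊢
      exact ⟨Finset.mem_univ _, hx.2⟩
    · intro x hx hx'
      rw [mem_cfilter] at hx hx'
      push_neg at hx'
      exfalso
      have hxh : G'.IsHalf x := fiber_isHalf φ hp.1 hx.2
      have hxnl : ¬ G'.IsLeg x := by
        intro hL
        exact (hx' (by rw [PGraph.legSet, mem_cfilter]; exact ⟨Finset.mem_univ _, hL⟩)) hx.2
      have hinv : G'.inv x ≠ x := by
        intro heq
        exact hxnl ⟨hxh, heq⟩
      exact φ.edge_not_leg x ⟨hxh, hinv⟩ (hx.2 ▸ hp)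
  refine ⟨?_, ?_, ?_, ?_⟩
  · intro v hv w hw
    rw [← fullFiberDeg_vertex φ hv, ← fullFiberDeg_vertex φ hw]
    exact fullFiberDeg_const φ hG v w
  · intro v hv h hh
    rw [← fullFiberDeg_vertex φ hv, ← hedge h hh]
    exact fullFiberDeg_const φ hG v h
  · intro v hv p hp
    rw [← fullFiberDeg_vertex φ hv, ← hleg p hp]
    exact fullFiberDeg_const φ hG v p
  · rintro ⟨v, hv, hpos⟩ x
    rw [← fullFiberDeg_vertex φ hv] at hpos
    have hx : 0 < fullFiberDeg φ x := fullFiberDeg_const φ hG x v ▸ hpos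
    have hne : (cfilter (fun x' => φ.toFun x' = x) Finset.univ).Nonempty := by
      by_contra hemp
      rw [Finset.not_nonempty_iff_eq_empty] at hemp
      rw [fullFiberDeg, hemp, Finset.sum_empty] at hx
      exact lt_irrefl 0 hx
    obtain ⟨x', hx'⟩ := hne
    exact ⟨x', (mem_cfilter.1 hx').2⟩

end TropDR
end

section
/- Let d ≥ 1 and m ≥ 1 be integers. For each i = 1,…,m let a_i = (a_{i1},…,a_{ik_i}) be a partition of d (a tuple of positive integers with a_{i1}+⋯+a_{ik_i} = d) of length k_i, and suppose t := k_1 + ⋯ + k_m − d(m−1) ≥ 1. Then there exist a partition c = (c_1,…,c_t) of d of length t and, for each i, a map r_i : {1,…,k_i} → {1,…,t} such that for all i and j one has Σ{ a_{ip} : r_i(p) = j } = c_j (so each r_i exhibits a_i as a refinement of c), and such that for every j = 1,…,t, Σ_{i=1}^m #{ p : r_i(p) = j } = c_j·(m−1) + 1. -/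
namespace PRL

/-- a downward-closed finite set of naturals is an initial segment -/
lemma downward_closed_eq_range (s : Finset ℕ) (h : ∀ x ∈ s, ∀ y, y < x → y ∈ s) :
    s = Finset.range s.card := by
  ext x
  simp only [Finset.mem_range]
  constructor
  · intro hx
    have hsub : Finset.range (x + 1) ⊆ s := by
      intro y hy
      simp only [Finset.mem_range] at hy
      rcases Nat.lt_succ_iff_lt_or_eq.mp hy with h' | h'
      · exact h x hx y h'
      · exact h' ▸ hx
    have := Finset.card_le_card hsub
    simpa using this
  · intro hx
    by_contra hxs
    have hsub : s ⊆ Finset.range x := by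
      intro z hz
      simp only [Finset.mem_range]
      by_contra hzx
      push_neg at hzx
      rcases eq_or_lt_of_le hzx with h' | h'
      · exact hxs (by rwa [← h'] at hz)
      · exact hxs (h z hz x h')
    have := Finset.card_le_card hsub
    simp at this
    omega

variable {m : ℕ} (k : Fin m → ℕ) (a : ∀ i, Fin (k i) → ℕ)

/-- padded entry function -/
def b (i : Fin m) (x : ℕ) : ℕ := if h : x < k i then a i ⟨x, h⟩ else 0

/-- prefix sums -/
def A (i : Fin m) (n : ℕ) : ℕ := ∑ x ∈ Finset.range n, b k a i x

/-- indicator that x is a prefix sum of partition i -/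
def chi (i : Fin m) (x : ℕ) : ℕ :=
  if x ∈ (Finset.range (k i + 1)).image (A k a i) then 1 else 0

def f (x : ℕ) : ℕ := ∑ i, chi k a i x

def G (m' : ℕ) (y : ℕ) : ℤ := ∑ x ∈ Finset.Icc 1 y, ((f k a x : ℤ) - (m' : ℤ))

noncomputable def X (m' v : ℕ) : ℕ := sInf {y : ℕ | (v : ℤ) ≤ G k a m' y}

noncomputable def Y (m' t d : ℕ) (j : ℕ) : ℕ := if j < t then X k a m' j else d

noncomputable def rn (m' t d : ℕ) (i : Fin m) (p : ℕ) : ℕ :=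
  ((Finset.range t).filter (fun v => Y k a m' t d (v + 1) < A k a i (p + 1))).card

end PRL

/-- **partition refinement lemma.** Let `d, m ≥ 1`, and for `i = 1,…,m` let
`a i = (a i 1, …, a i (k i))` be a partition of `d` of length `k i` (positive entries
summing to `d`).  Suppose `t = k 1 + ⋯ + k m − d(m−1) ≥ 1`.  Then there exist a partition
`c = (c 1, …, c t)` of `d` of length `t` and refinement maps `r i : Fin (k i) → Fin t`
(so the entries of `a i` indexed by `(r i)⁻¹(j)` sum to `c j`), such that for every `j`
the total number of parts refining `c j`, summed over `i`, is `c j · (m−1) + 1`. -/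
theorem partition_refinement_lemma
    (d m : ℕ) (hd : 1 ≤ d) (hm : 1 ≤ m)
    (k : Fin m → ℕ) (a : ∀ i, Fin (k i) → ℕ)
    (hpos : ∀ i p, 0 < a i p) (hsum : ∀ i, ∑ p, a i p = d)
    (t : ℕ) (ht : (t : ℤ) = (∑ i, (k i : ℤ)) - (d : ℤ) * ((m : ℤ) - 1)) (htpos : 1 ≤ t) :
    ∃ (c : Fin t → ℕ) (r : ∀ i, Fin (k i) → Fin t),
      (∀ j, 0 < c j) ∧ (∑ j, c j = d) ∧
      (∀ i j, ∑ p ∈ Finset.univ.filter (fun p => r i p = j), a i p = c j) ∧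
      (∀ j, (∑ i, (Finset.univ.filter (fun p => r i p = j)).card) = c j * (m - 1) + 1) := by
  set m' := m - 1 with hm'
  set A := PRL.A k a with hA
  set chi := PRL.chi k a with hchi
  set f := PRL.f k a with hf
  set G := PRL.G k a m' with hG
  set X := PRL.X k a m' with hX
  set Y := PRL.Y k a m' t d with hY
  set rn := PRL.rn k a m' t d with hrn
  -- basic facts about A
  have hAsucc : ∀ i n, A i (n + 1) = A i n + PRL.b k a i n := by
    intro i n; simp [hA, PRL.A, Finset.sum_range_succ]
  have hA0 : ∀ i, A i 0 = 0 := by intro i; simp [hA, PRL.A]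
  have hAd : ∀ i, A i (k i) = d := by
    intro i
    rw [hA, PRL.A, ← Fin.sum_univ_eq_sum_range (fun x => PRL.b k a i x) (k i), ← hsum i]
    exact Finset.sum_congr rfl fun p _ => by simp [PRL.b, p.isLt]
  have hAmono : ∀ i, Monotone (A i) := by
    intro i
    apply monotone_nat_of_le_succ
    intro n; rw [hAsucc]; omega
  have hAstrict : ∀ i n n', n < n' → n' ≤ k i → A i n < A i n' := by
    intro i n n' h1 h2
    have h3 : A i (n + 1) ≤ A i n' := hAmono i h1
    have hb : PRL.b k a i n = a i ⟨n, by omega⟩ := dif_pos (by omega)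
    have hap : 0 < PRL.b k a i n := by rw [hb]; exact hpos i _
    have h4 := hAsucc i n
    omega
  have hAle : ∀ i n, A i n ≤ d := by
    intro i n
    rcases le_or_gt n (k i) with h | h
    · have h2 := hAmono i h
      rw [hAd i] at h2
      exact h2
    · have : A i n = A i (k i) := by
        rw [hA, PRL.A, PRL.A]
        apply (Finset.sum_subset (by intro x hx; simp_all; omega) _).symm
        intro x hx hx'
        simp only [Finset.mem_range] at hx hx'
        exact dif_neg (by omega)
      rw [this, hAd i]
  -- chi facts
  have hchi01 : ∀ i x, chi i x = 0 ∨ chi i x = 1 := by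
    intro i x
    rw [hchi, PRL.chi]
    split <;> simp
  have hchi_iff : ∀ i x, chi i x = 1 ↔ ∃ n, n ≤ k i ∧ A i n = x := by
    intro i x
    rw [hchi, PRL.chi]
    split <;> rename_i hmem
    · simp only [Finset.mem_image, Finset.mem_range] at hmem
      obtain ⟨n, hn, hAn⟩ := hmem
      exact ⟨fun _ => ⟨n, by omega, hAn⟩, fun _ => rfl⟩
    · simp only [Finset.mem_image, Finset.mem_range] at hmem
      constructor
      · intro h; exact absurd h (by norm_num)
      · rintro ⟨n, hn, hAn⟩
        exact absurd ⟨n, by omega, hAn⟩ hmem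
  have hchid : ∀ i, chi i d = 1 := fun i => (hchi_iff i d).mpr ⟨k i, le_refl _, hAd i⟩
  have hfchi : ∀ x, f x = ∑ i, chi i x := fun x => rfl
  have hf_le : ∀ x, f x ≤ m := by
    intro x
    rw [hfchi]
    calc ∑ i, chi i x ≤ ∑ _i : Fin m, 1 := by
          apply Finset.sum_le_sum; intro i _
          rcases hchi01 i x with h | h <;> omega
      _ = m := by simp
  have hfd : f d = m := by
    rw [hfchi]
    calc ∑ i, chi i d = ∑ _i : Fin m, 1 := Finset.sum_congr rfl fun i _ => hchid i
      _ = m := by simp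
  have hfall : ∀ x, f x = m → ∀ i, chi i x = 1 := by
    intro x hx i
    rcases hchi01 i x with h | h
    · exfalso
      have h0 : ∑ j, chi j x = f x := (hfchi x).symm
      have h2 : ∑ j ∈ Finset.univ.erase i, chi j x ≤ ∑ _j ∈ Finset.univ.erase i, 1 := by
        apply Finset.sum_le_sum; intro j _
        rcases hchi01 j x with h' | h' <;> omega
      rw [← Finset.add_sum_erase _ _ (Finset.mem_univ i)] at h0
      simp only [Finset.sum_const, smul_eq_mul, mul_one] at h2
      have hcard : (Finset.univ.erase i).card = m - 1 := by
        rw [Finset.card_erase_of_mem (Finset.mem_univ i)]; simp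
      rw [hcard] at h2
      omega
    · exact h
  -- sum of chi over [1,d] is k i
  have hchisum : ∀ i, ∑ x ∈ Finset.Icc 1 d, chi i x = k i := by
    intro i
    have h1 : ∑ x ∈ Finset.Icc 1 d, chi i x
        = ((Finset.Icc 1 d).filter (fun x => x ∈ (Finset.range (k i + 1)).image (A i))).card := by
      rw [Finset.card_filter]
      apply Finset.sum_congr rfl
      intro x _
      simp only [hchi, PRL.chi, hA]
    have h2 : (Finset.Icc 1 d).filter (fun x => x ∈ (Finset.range (k i + 1)).image (A i))
        = (Finset.Icc 1 (k i)).image (A i) := by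
      ext x
      simp only [Finset.mem_filter, Finset.mem_Icc, Finset.mem_image, Finset.mem_range]
      constructor
      · rintro ⟨⟨hx1, hx2⟩, n, hn, hAn⟩
        refine ⟨n, ⟨?_, by omega⟩, hAn⟩
        by_contra hcon
        have hn0 : n = 0 := by omega
        rw [hn0, hA0 i] at hAn; omega
      · rintro ⟨n, ⟨hn1, hn2⟩, hAn⟩
        have hlt := hAstrict i 0 n (by omega) hn2
        rw [hA0 i] at hlt
        exact ⟨⟨by omega, hAn ▸ hAle i n⟩, n, by omega, hAn⟩
    have hinj : Set.InjOn (A i) (Finset.Icc 1 (k i)) := by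
      intro x hx y hy hxy
      simp only [Finset.coe_Icc, Set.mem_Icc] at hx hy
      by_contra hne
      rcases Nat.lt_or_ge x y with hc | hc
      · exact absurd hxy (Nat.ne_of_lt (hAstrict i x y hc hy.2))
      · exact absurd hxy.symm (Nat.ne_of_lt (hAstrict i y x (by omega) hx.2))
    rw [h1, h2, Finset.card_image_of_injOn hinj, Nat.card_Icc]
    omega
  -- G facts
  have hGd : G d = t := by
    have h1 : ∑ x ∈ Finset.Icc 1 d, f x = ∑ i, k i := by
      calc ∑ x ∈ Finset.Icc 1 d, f x = ∑ x ∈ Finset.Icc 1 d, ∑ i, chi i x :=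
            Finset.sum_congr rfl fun x _ => hfchi x
        _ = ∑ i, ∑ x ∈ Finset.Icc 1 d, chi i x := Finset.sum_comm
        _ = ∑ i, k i := Finset.sum_congr rfl fun i _ => hchisum i
    have h1' : ∑ x ∈ Finset.Icc 1 d, (f x : ℤ) = ∑ i, (k i : ℤ) := by
      have := congrArg (fun n : ℕ => (n : ℤ)) h1
      push_cast at this
      exact this
    have hm'c : (m' : ℤ) = (m : ℤ) - 1 := by omega
    rw [hG, PRL.G]
    rw [show (fun x => ((PRL.f k a x : ℤ) - (m' : ℤ))) = (fun x => ((f x : ℤ) - (m' : ℤ))) from rfl]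
    rw [Finset.sum_sub_distrib, Finset.sum_const, Nat.card_Icc, h1', ht, hm'c]
    have hdd : d + 1 - 1 = d := by omega
    rw [hdd, nsmul_eq_mul]
  have hG0 : G 0 = 0 := by simp [hG, PRL.G]
  have hGstep : ∀ y, G (y + 1) = G y + ((f (y + 1) : ℤ) - (m' : ℤ)) := by
    intro y
    rw [hG, PRL.G, PRL.G]
    rw [show Finset.Icc 1 (y + 1) = insert (y + 1) (Finset.Icc 1 y) by
      ext z; simp only [Finset.mem_Icc, Finset.mem_insert]; omega]
    rw [Finset.sum_insert (by simp)]
    rw [show PRL.f k a = f from rfl]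
    ring
  have hfm'le : ∀ y, (f y : ℤ) - (m' : ℤ) ≤ 1 := by
    intro y
    have := hf_le y
    omega
  -- X facts
  have hXmem : ∀ v, v ≤ t → (v : ℤ) ≤ G (X v) := by
    intro v hv
    have hne : ({y : ℕ | (v : ℤ) ≤ G y}).Nonempty := ⟨d, by
      simp only [Set.mem_setOf_eq, hGd]; exact_mod_cast hv⟩
    exact Nat.sInf_mem hne
  have hXmin : ∀ v y, y < X v → G y < v := by
    intro v y hy
    by_contra hcon
    push_neg at hcon
    have hle : X v ≤ y := Nat.sInf_le (show y ∈ {y : ℕ | (v : ℤ) ≤ G y} from hcon)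
    omega
  have hX0 : X 0 = 0 := by
    have h0 : (0 : ℕ) ∈ {y : ℕ | ((0:ℕ) : ℤ) ≤ G y} := by simp [hG0]
    have hle : X 0 ≤ 0 := Nat.sInf_le h0
    omega
  have hGX : ∀ v, v ≤ t → G (X v) = v ∧ (1 ≤ v → f (X v) = m) := by
    intro v hv
    rcases Nat.eq_zero_or_pos v with rfl | hv1
    · constructor
      · rw [hX0]; exact_mod_cast hG0
      · omega
    · have h1 := hXmem v hv
      have h2 : X v ≠ 0 := by
        intro hcon; rw [hcon, hG0] at h1
        have : (1 : ℤ) ≤ (v : ℤ) := by exact_mod_cast hv1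
        omega
      obtain ⟨y, hy⟩ : ∃ y, X v = y + 1 := ⟨X v - 1, by omega⟩
      have h3 : G y < v := hXmin v y (by omega)
      have h4 := hGstep y
      have h5 := hfm'le (y + 1)
      rw [← hy] at h4 h5
      have h6 := hf_le (y + 1)
      rw [← hy] at h6
      constructor
      · omega
      · intro _
        omega
  have hXlt : ∀ v, v < t → X v < X (v + 1) := by
    intro v hv
    have h1 : X v ≤ X (v + 1) := by
      have hmem2 : X (v + 1) ∈ {y : ℕ | (v : ℤ) ≤ G y} := by
        have := (hGX (v + 1) (by omega)).1
        simp only [Set.mem_setOf_eq]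
        omega
      exact Nat.sInf_le hmem2
    have h2 := (hGX v (by omega)).1
    have h3 := (hGX (v + 1) (by omega)).1
    rcases eq_or_lt_of_le h1 with h | h
    · rw [h] at h2; omega
    · exact h
  have hXd1 : t ≥ 1 → X (t - 1) ≤ d - 1 := by
    intro _
    have hmem2 : (d - 1 : ℕ) ∈ {y : ℕ | ((t - 1 : ℕ) : ℤ) ≤ G y} := by
      simp only [Set.mem_setOf_eq]
      have hds : d - 1 + 1 = d := by omega
      have h4 := hGstep (d - 1)
      rw [hds] at h4
      rw [hfd] at h4
      omega
    exact Nat.sInf_le hmem2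
  -- Y facts
  have hY0 : Y 0 = 0 := by
    rw [hY, PRL.Y, if_pos (by omega : 0 < t)]
    exact hX0
  have hYt : Y t = d := by rw [hY, PRL.Y, if_neg (by omega)]
  have hYlt : ∀ j, j < t → Y j < Y (j + 1) := by
    intro j hj
    rcases Nat.lt_or_ge (j + 1) t with h | h
    · rw [hY, PRL.Y, PRL.Y, if_pos hj, if_pos h]
      exact hXlt j (by omega)
    · have hjt : j + 1 = t := by omega
      rw [hY, PRL.Y, PRL.Y, if_pos hj, if_neg (by omega), ← hX]
      have := hXd1 (by omega)
      have hjeq : j = t - 1 := by omega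
      rw [hjeq]
      omega
  have hYmono : ∀ j j', j ≤ j' → j' ≤ t → Y j ≤ Y j' := by
    intro j j' h1 h2
    induction j' with
    | zero => have : j = 0 := by omega
              rw [this]
    | succ n ih =>
      rcases Nat.lt_or_ge j (n + 1) with h | h
      · exact le_trans (ih (by omega) (by omega)) (le_of_lt (hYlt n (by omega)))
      · have : j = n + 1 := by omega
        rw [this]
  have hGY : ∀ j, j ≤ t → G (Y j) = j := by
    intro j hj
    rcases Nat.lt_or_ge j t with h | h
    · rw [hY, PRL.Y, if_pos h]
      exact (hGX j (by omega)).1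
    · have : j = t := by omega
      rw [this, hYt, hGd]
  have hYmem : ∀ j, j ≤ t → ∀ i, ∃ n, n ≤ k i ∧ A i n = Y j := by
    intro j hj i
    rcases Nat.eq_zero_or_pos j with rfl | hj1
    · exact ⟨0, by omega, by rw [hA0, hY0]⟩
    · rcases Nat.lt_or_ge j t with h | h
      · have hfj : f (X j) = m := (hGX j (by omega)).2 hj1
        have := (hchi_iff i (X j)).mp (hfall _ hfj i)
        rw [hY, PRL.Y, if_pos h]
        exact this
      · have : j = t := by omega
        rw [this, hYt]
        exact ⟨k i, le_refl _, hAd i⟩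
  -- interval sums of f
  have hIoc : ∀ j, j < t →
      ∑ x ∈ Finset.Ioc (Y j) (Y (j + 1)), (f x : ℤ)
        = (m' : ℤ) * ((Y (j + 1) : ℤ) - (Y j : ℤ)) + 1 := by
    intro j hj
    have hIcc : ∀ y : ℕ, Finset.Icc 1 y = Finset.Ioc 0 y := by
      intro y; ext z; simp only [Finset.mem_Icc, Finset.mem_Ioc]; omega
    have h1 : G (Y j) + ∑ x ∈ Finset.Ioc (Y j) (Y (j + 1)), ((f x : ℤ) - (m' : ℤ))
        = G (Y (j + 1)) := by
      rw [hG, PRL.G, PRL.G, hIcc, hIcc]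
      rw [show (fun x => ((PRL.f k a x : ℤ) - (m' : ℤ))) = (fun x => ((f x : ℤ) - (m' : ℤ))) from rfl]
      exact Finset.sum_Ioc_consecutive _ (Nat.zero_le (Y j)) (le_of_lt (hYlt j hj))
    have h2 : G (Y (j + 1)) = (j + 1 : ℕ) := hGY (j + 1) (by omega)
    have h3 : G (Y j) = j := hGY j (by omega)
    have h4 : ∑ x ∈ Finset.Ioc (Y j) (Y (j + 1)), ((f x : ℤ) - (m' : ℤ))
        = ∑ x ∈ Finset.Ioc (Y j) (Y (j + 1)), (f x : ℤ)
          - ((Finset.Ioc (Y j) (Y (j + 1))).card : ℤ) * (m' : ℤ) := by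
      rw [Finset.sum_sub_distrib, Finset.sum_const, nsmul_eq_mul]
    have hcard : (Finset.Ioc (Y j) (Y (j + 1))).card = Y (j + 1) - Y j := Nat.card_Ioc _ _
    have hcast : ((Y (j + 1) - Y j : ℕ) : ℤ) = (Y (j + 1) : ℤ) - (Y j : ℤ) := by
      have := hYlt j hj; omega
    rw [hcard] at h4
    rw [hcast] at h4
    rw [h4, h3, h2] at h1
    push_cast at h1 ⊢
    linarith
  -- the refinement map: basic properties
  have hrn_eq : ∀ (i : Fin m) (p : ℕ),
      rn i p = ((Finset.range t).filter (fun v => Y (v + 1) < A i (p + 1))).card := by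
    intro i p; rfl
  have hrmem : ∀ (i : Fin m) (p : Fin (k i)),
      rn i ↑p < t ∧ Y (rn i ↑p) < A i (↑p + 1) ∧ A i (↑p + 1) ≤ Y (rn i ↑p + 1) := by
    intro i p
    have hB1 : 1 ≤ A i (↑p + 1) := by
      have := hAstrict i 0 (↑p + 1) (by omega) (by have := p.isLt; omega)
      rw [hA0] at this; omega
    have hBd : A i (↑p + 1) ≤ d := hAle i _
    set s := (Finset.range t).filter (fun v => Y (v + 1) < A i (↑p + 1)) with hs
    have hdc : ∀ x ∈ s, ∀ y, y < x → y ∈ s := by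
      intro x hx y hy
      simp only [hs, Finset.mem_filter, Finset.mem_range] at hx ⊢
      exact ⟨by omega, lt_of_le_of_lt (hYmono (y + 1) (x + 1) (by omega) (by omega)) hx.2⟩
    have hrange := PRL.downward_closed_eq_range s hdc
    have hcard_le : s.card ≤ t := by
      calc s.card ≤ (Finset.range t).card := Finset.card_le_card (Finset.filter_subset _ _)
        _ = t := Finset.card_range t
    have hcardlt : s.card < t := by
      rcases eq_or_lt_of_le hcard_le with h | h
      · exfalso
        have : t - 1 ∈ s := by rw [hrange, h]; simp; omega
        simp only [hs, Finset.mem_filter, Finset.mem_range] at this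
        have h2 := this.2
        have : t - 1 + 1 = t := by omega
        rw [this] at h2
        rw [hYt] at h2
        omega
      · exact h
    have h1 : Y s.card < A i (↑p + 1) := by
      rcases Nat.eq_zero_or_pos s.card with h | h
      · rw [h, hY0]; omega
      · have hmem : s.card - 1 ∈ s := by
          rw [hrange]
          simp only [Finset.card_range, Finset.mem_range]
          omega
        simp only [hs, Finset.mem_filter, Finset.mem_range] at hmem
        have h2 := hmem.2
        have he : s.card - 1 + 1 = s.card := by omega
        rwa [he] at h2
    have h2 : A i (↑p + 1) ≤ Y (s.card + 1) := by
      by_contra hcon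
      push_neg at hcon
      have : s.card ∈ s := by
        simp only [hs, Finset.mem_filter, Finset.mem_range]
        exact ⟨hcardlt, hcon⟩
      rw [hrange] at this
      simp at this
    rw [hrn_eq, ← hs]
    exact ⟨hcardlt, h1, h2⟩
  have hruniq : ∀ j j' B, j < t → j' < t → Y j < B → B ≤ Y (j + 1) → Y j' < B → B ≤ Y (j' + 1) → j = j' := by
    intro j j' B h1 h2 ha hb hc hd'
    by_contra hne
    rcases Nat.lt_or_ge j j' with h | h
    · have : Y (j + 1) ≤ Y j' := hYmono _ _ (by omega) (by omega)
      omega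
    · have : Y (j' + 1) ≤ Y j := hYmono _ _ (by omega) (by omega)
      omega
  -- key structural lemma
  have hkey : ∀ (i : Fin m) (j : ℕ), j < t → ∃ n₀ n₁, n₀ < n₁ ∧ n₁ ≤ k i ∧
      A i n₀ = Y j ∧ A i n₁ = Y (j + 1) ∧
      ∀ p : Fin (k i), (rn i ↑p = j ↔ (n₀ ≤ ↑p ∧ ↑p < n₁)) := by
    intro i j hj
    obtain ⟨n₀, hn₀k, hn₀⟩ := hYmem j (by omega) i
    obtain ⟨n₁, hn₁k, hn₁⟩ := hYmem (j + 1) (by omega) i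
    have hY01 : Y j < Y (j + 1) := hYlt j hj
    have hn01 : n₀ < n₁ := by
      by_contra hcon
      push_neg at hcon
      have := hAmono i hcon
      omega
    refine ⟨n₀, n₁, hn01, hn₁k, hn₀, hn₁, fun p => ?_⟩
    obtain ⟨hrt, hrl, hru⟩ := hrmem i p
    constructor
    · intro hep
      rw [hep] at hrl hru
      constructor
      · by_contra hcon
        push_neg at hcon
        have := hAmono i (show (↑p + 1 : ℕ) ≤ n₀ by omega)
        omega
      · by_contra hcon
        push_neg at hcon
        have := hAstrict i n₁ (↑p + 1) (by omega) (by have := p.isLt; omega)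
        omega
    · rintro ⟨h1, h2⟩
      have ha := hAstrict i n₀ (↑p + 1) (by omega) (by have := p.isLt; omega)
      have hb := hAmono i (show (↑p + 1 : ℕ) ≤ n₁ by omega)
      exact hruniq (rn i ↑p) j (A i (↑p + 1)) hrt hj hrl hru (by omega) (by omega)
  -- now build the witnesses
  refine ⟨fun j => Y (↑j + 1) - Y ↑j, fun i p => ⟨rn i ↑p, (hrmem i p).1⟩, ?_, ?_, ?_, ?_⟩
  · intro j
    show 0 < Y (↑j + 1) - Y ↑j
    have := hYlt ↑j j.isLt
    omega
  · rw [Fin.sum_univ_eq_sum_range (fun j => Y (j + 1) - Y j) t]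
    have key : ∀ n, n ≤ t → ∑ j ∈ Finset.range n, (Y (j + 1) - Y j) = Y n - Y 0 := by
      intro n
      induction n with
      | zero => simp
      | succ nn ih =>
        intro h
        rw [Finset.sum_range_succ, ih (by omega)]
        have h1 : Y 0 ≤ Y nn := hYmono 0 nn (by omega) (by omega)
        have h2 : Y nn ≤ Y (nn + 1) := le_of_lt (hYlt nn (by omega))
        omega
    rw [key t le_rfl, hY0, hYt]
    omega
  · intro i j
    obtain ⟨n₀, n₁, hn01, hn₁k, hA₀, hA₁, hiff⟩ := hkey i ↑j j.isLt
    have hfilter : Finset.univ.filter (fun p : Fin (k i) => (⟨rn i ↑p, (hrmem i p).1⟩ : Fin t) = j)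
        = Finset.univ.filter (fun p : Fin (k i) => n₀ ≤ ↑p ∧ ↑p < n₁) := by
      apply Finset.filter_congr
      intro p _
      rw [show ((⟨rn i ↑p, (hrmem i p).1⟩ : Fin t) = j) ↔ rn i ↑p = ↑j from Fin.ext_iff]
      exact hiff p
    have step1 : ∑ p ∈ Finset.univ.filter (fun p : Fin (k i) => n₀ ≤ ↑p ∧ ↑p < n₁), a i p
        = ∑ x ∈ (Finset.range (k i)).filter (fun x => n₀ ≤ x ∧ x < n₁), PRL.b k a i x := by
      rw [Finset.sum_filter, Finset.sum_filter,
        ← Fin.sum_univ_eq_sum_range (fun x => if n₀ ≤ x ∧ x < n₁ then PRL.b k a i x else 0) (k i)]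
      apply Finset.sum_congr rfl
      intro p _
      by_cases hc : n₀ ≤ (↑p : ℕ) ∧ (↑p : ℕ) < n₁
      · rw [if_pos hc, if_pos hc]
        simp [PRL.b, p.isLt]
      · rw [if_neg hc, if_neg hc]
    have step2 : (Finset.range (k i)).filter (fun x => n₀ ≤ x ∧ x < n₁) = Finset.Ico n₀ n₁ := by
      ext x
      simp only [Finset.mem_filter, Finset.mem_range, Finset.mem_Ico]
      omega
    have step3 : A i n₀ + ∑ x ∈ Finset.Ico n₀ n₁, PRL.b k a i x = A i n₁ := by
      rw [hA, PRL.A, PRL.A, Finset.range_eq_Ico, Finset.range_eq_Ico]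
      exact Finset.sum_Ico_consecutive _ (Nat.zero_le n₀) (by omega : n₀ ≤ n₁)
    show _ = Y (↑j + 1) - Y ↑j
    rw [hfilter, step1, step2]
    have := hYlt ↑j j.isLt
    omega
  · intro j
    have hcard : ∀ i, (Finset.univ.filter
        (fun p : Fin (k i) => (⟨rn i ↑p, (hrmem i p).1⟩ : Fin t) = j)).card
        = ∑ x ∈ Finset.Ioc (Y ↑j) (Y (↑j + 1)), chi i x := by
      intro i
      obtain ⟨n₀, n₁, hn01, hn₁k, hA₀, hA₁, hiff⟩ := hkey i ↑j j.isLt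
      have hfilter : Finset.univ.filter (fun p : Fin (k i) => (⟨rn i ↑p, (hrmem i p).1⟩ : Fin t) = j)
          = Finset.univ.filter (fun p : Fin (k i) => n₀ ≤ ↑p ∧ ↑p < n₁) := by
        apply Finset.filter_congr
        intro p _
        rw [show ((⟨rn i ↑p, (hrmem i p).1⟩ : Fin t) = j) ↔ rn i ↑p = ↑j from Fin.ext_iff]
        exact hiff p
      have hc1 : (Finset.univ.filter (fun p : Fin (k i) => n₀ ≤ ↑p ∧ ↑p < n₁)).card = n₁ - n₀ := by
        rw [Finset.card_filter]
        rw [Fin.sum_univ_eq_sum_range (fun x => if n₀ ≤ x ∧ x < n₁ then 1 else 0) (k i)]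
        rw [← Finset.card_filter]
        rw [show (Finset.range (k i)).filter (fun x => n₀ ≤ x ∧ x < n₁) = Finset.Ico n₀ n₁ by
          ext x; simp only [Finset.mem_filter, Finset.mem_range, Finset.mem_Ico]; omega]
        rw [Nat.card_Ico]
      have hc2 : ∑ x ∈ Finset.Ioc (Y ↑j) (Y (↑j + 1)), chi i x = n₁ - n₀ := by
        have e1 : ∑ x ∈ Finset.Ioc (Y ↑j) (Y (↑j + 1)), chi i x
            = ((Finset.Ioc (Y ↑j) (Y (↑j + 1))).filter
                (fun x => x ∈ (Finset.range (k i + 1)).image (A i))).card := by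
          rw [Finset.card_filter]
          apply Finset.sum_congr rfl
          intro x _
          simp only [hchi, PRL.chi, hA]
        have e2 : (Finset.Ioc (Y ↑j) (Y (↑j + 1))).filter
              (fun x => x ∈ (Finset.range (k i + 1)).image (A i))
            = (Finset.Ioc n₀ n₁).image (A i) := by
          ext x
          simp only [Finset.mem_filter, Finset.mem_Ioc, Finset.mem_image, Finset.mem_range]
          constructor
          · rintro ⟨⟨hx1, hx2⟩, n, hn, hAn⟩
            refine ⟨n, ⟨?_, ?_⟩, hAn⟩
            · by_contra hcon
              push_neg at hcon
              have := hAmono i hcon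
              omega
            · by_contra hcon
              push_neg at hcon
              have := hAstrict i n₁ n hcon (by omega)
              omega
          · rintro ⟨n, ⟨hn1, hn2⟩, hAn⟩
            have hle : A i n ≤ A i n₁ := hAmono i hn2
            have hgt := hAstrict i n₀ n hn1 (by omega)
            exact ⟨⟨by omega, by omega⟩, n, by omega, hAn⟩
        have hinj : Set.InjOn (A i) (Finset.Ioc n₀ n₁) := by
          intro x hx y hy hxy
          simp only [Finset.coe_Ioc, Set.mem_Ioc] at hx hy
          by_contra hne
          rcases Nat.lt_or_ge x y with hcc | hcc
          · exact absurd hxy (Nat.ne_of_lt (hAstrict i x y hcc (le_trans hy.2 hn₁k)))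
          · exact absurd hxy.symm (Nat.ne_of_lt (hAstrict i y x (by omega) (le_trans hx.2 hn₁k)))
        rw [e1, e2, Finset.card_image_of_injOn hinj, Nat.card_Ioc]
      rw [hfilter, hc1, hc2]
    have hYle := hYlt ↑j j.isLt
    have hIj := hIoc ↑j j.isLt
    calc ∑ i, (Finset.univ.filter
          (fun p : Fin (k i) => (⟨rn i ↑p, (hrmem i p).1⟩ : Fin t) = j)).card
        = ∑ i, ∑ x ∈ Finset.Ioc (Y ↑j) (Y (↑j + 1)), chi i x :=
          Finset.sum_congr rfl fun i _ => hcard i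
      _ = ∑ x ∈ Finset.Ioc (Y ↑j) (Y (↑j + 1)), ∑ i, chi i x := Finset.sum_comm
      _ = ∑ x ∈ Finset.Ioc (Y ↑j) (Y (↑j + 1)), f x :=
          Finset.sum_congr rfl fun x _ => (hfchi x).symm
      _ = (Y (↑j + 1) - Y ↑j) * m' + 1 := by
          have hzz : ((∑ x ∈ Finset.Ioc (Y ↑j) (Y (↑j + 1)), f x : ℕ) : ℤ)
              = (((Y (↑j + 1) - Y ↑j) * m' + 1 : ℕ) : ℤ) := by
            push_cast [Nat.cast_sub (le_of_lt hYle)]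
            rw [hIj]
            ring
          exact_mod_cast hzz
end
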